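/- Let ε, f ∈ (0,1) be real numbers, Δ ≥ 1 a natural number, η·κ > 0 a real number, δ ∈ (0,1] with δ ≥ 2Δf + 4ε + 4Δ/(ηκ), c ∈ [0,1], and t ≥ 0, m > 0 real numbers with t ≤ c·(1−δ)·m. Then for all real numbers L' ≥ ηκ, L = L' + 2Δ, and Y', Z with Z < (1+ε)·(t/m)·(f/(1−f))·L and Y' > (1−ε)·f·(1−f)^{2Δ−1}·L', it holds that Z < Y'. -/

import Mathlib

set_option maxHeartbeats 1000000


/-- Bounded-delay typical-execution bound (Lemma 5 e): `Z(S) < Y'(S')`. -/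
theorem typical_execution_bounded_delay_e
    (ε f : ℝ) (hε : ε ∈ Set.Ioo (0:ℝ) 1) (hf : f ∈ Set.Ioo (0:ℝ) 1)
    (Δ : ℕ) (hΔ : 1 ≤ Δ) (ηκ : ℝ) (hηκ : 0 < ηκ)
    (δ : ℝ) (hδ : δ ∈ Set.Ioc (0:ℝ) 1)
    (hδ2 : 2 * Δ * f + 4 * ε + 4 * Δ / ηκ ≤ δ)
    (c : ℝ) (hc : c ∈ Set.Icc (0:ℝ) 1)
    (t m : ℝ) (ht : 0 ≤ t) (hm : 0 < m) (htm : t ≤ c * (1 - δ) * m) :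
    ∀ L' L Y' Z : ℝ, ηκ ≤ L' → L = L' + 2 * Δ →
      Z < (1 + ε) * (t / m) * (f / (1 - f)) * L →
      Y' > (1 - ε) * f * (1 - f) ^ (2 * Δ - 1) * L' →
      Z < Y' := by
  obtain ⟨hε0, hε1⟩ := hε
  obtain ⟨hf0, hf1⟩ := hf
  obtain ⟨hδ0, hδ1⟩ := hδ
  obtain ⟨hc0, hc1⟩ := hc
  intro L' L Y' Z hL' hL hZ hY'
  have hΔR : (1:ℝ) ≤ (Δ:ℝ) := by exact_mod_cast hΔ
  have hfm : (0:ℝ) < 1 - f := by linarith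
  have hL'0 : 0 < L' := lt_of_lt_of_le hηκ hL'
  -- rewrite the power
  have hpow : f * (1 - f) ^ (2 * Δ - 1) = f / (1 - f) * (1 - f) ^ (2 * Δ) := by
    have h1 : 2 * Δ = (2 * Δ - 1) + 1 := by omega
    rw [h1, pow_succ]
    field_simp
    ring_nf
    congr 1
    omega
  -- Bernoulli
  have hbern : 1 - 2 * Δ * f ≤ (1 - f) ^ (2 * Δ) := by
    have h := one_add_mul_le_pow (a := -f) (by linarith) (2 * Δ)
    calc 1 - 2 * Δ * f = 1 + (2*Δ : ℕ) * (-f) := by push_cast; ring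
    _ ≤ (1 + -f) ^ (2*Δ) := h
    _ = (1 - f) ^ (2*Δ) := by rw [← sub_eq_add_neg]
  have hδnn : 0 ≤ 1 - δ := by linarith
  -- t/m ≤ 1 - δ
  have htm' : t / m ≤ 1 - δ := by
    rw [div_le_iff₀ hm]
    nlinarith [mul_nonneg (mul_nonneg (by linarith : (0:ℝ) ≤ 1 - c) hδnn) hm.le]
  -- L ≤ (1 + 2Δ/ηκ) * L'
  have hLb : L ≤ (1 + 2 * Δ / ηκ) * L' := by
    have h2 : (2:ℝ) * Δ ≤ 2 * Δ / ηκ * L' := by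
      rw [div_mul_eq_mul_div, le_div_iff₀ hηκ]
      nlinarith
    nlinarith
  -- key scalar inequality
  have hkey : (1 + ε) * (1 - δ) * (1 + 2 * Δ / ηκ) ≤ (1 - ε) * (1 - 2 * Δ * f) := by
    set b := 2 * Δ / ηκ with hb
    have hb0 : 0 < b := by positivity
    have hδ2' : 1 - δ ≤ 1 - 2*Δ*f - 4*ε - 2*b := by
      have : 4 * Δ / ηκ = 2 * b := by rw [hb]; ring
      linarith
    have hu0 : 0 < 2 * Δ * f := by positivity
    nlinarith [mul_nonneg hδnn hb0.le, mul_nonneg (mul_nonneg (by linarith : (0:ℝ) ≤ 1+ε) hδnn) hb0.le]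
  -- assemble
  have hffm : 0 ≤ f / (1 - f) := by positivity
  have hL0 : 0 ≤ L := by linarith
  have main : (1 + ε) * (t / m) * (f / (1 - f)) * L ≤ (1 - ε) * f * (1 - f) ^ (2 * Δ - 1) * L' := by
    have step1 : (1 + ε) * (t / m) * L ≤ (1 + ε) * (1 - δ) * ((1 + 2 * Δ / ηκ) * L') := by
      have h1 : (1 + ε) * (t / m) * L ≤ (1 + ε) * (1 - δ) * L :=
        mul_le_mul_of_nonneg_right
          (mul_le_mul_of_nonneg_left htm' (by linarith)) hL0
      have h2 : (1 + ε) * (1 - δ) * L ≤ (1 + ε) * (1 - δ) * ((1 + 2 * Δ / ηκ) * L') :=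
        mul_le_mul_of_nonneg_left hLb (mul_nonneg (by linarith) hδnn)
      linarith
    have step2 : (1 + ε) * (1 - δ) * ((1 + 2 * Δ / ηκ) * L') ≤ (1 - ε) * (1 - 2 * Δ * f) * L' := by
      calc (1 + ε) * (1 - δ) * ((1 + 2 * Δ / ηκ) * L')
          = (1 + ε) * (1 - δ) * (1 + 2 * Δ / ηκ) * L' := by ring
        _ ≤ (1 - ε) * (1 - 2 * Δ * f) * L' := mul_le_mul_of_nonneg_right hkey hL'0.le
    have step3 : (1 - ε) * (1 - 2 * Δ * f) * L' ≤ (1 - ε) * (1 - f) ^ (2 * Δ) * L' :=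
      mul_le_mul_of_nonneg_right
        (mul_le_mul_of_nonneg_left hbern (by linarith)) hL'0.le
    have hfin : (1 + ε) * (t / m) * L ≤ (1 - ε) * (1 - f) ^ (2 * Δ) * L' := by linarith
    calc (1 + ε) * (t / m) * (f / (1 - f)) * L
        = (f / (1 - f)) * ((1 + ε) * (t / m) * L) := by ring
      _ ≤ (f / (1 - f)) * ((1 - ε) * (1 - f) ^ (2 * Δ) * L') := by
          exact mul_le_mul_of_nonneg_left hfin hffm
      _ = (1 - ε) * (f / (1 - f) * (1 - f) ^ (2 * Δ)) * L' := by ring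
      _ = (1 - ε) * f * (1 - f) ^ (2 * Δ - 1) * L' := by rw [← hpow]; ring
  linarith
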